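/- Let G be a triangle-free graph, let u be a vertex of maximum degree, let A = N(u), B = V(G) \ N[u], and H = G[B]. Suppose some vertex z of B satisfies d_H(z) = |B| - 1, and |A ∩ N(z)| ≤ 2k for a nonnegative integer k. Then χ_k(G) ≤ 2. -/

import Mathlib

open SimpleGraph

/-- A set `U` is `k`-independent in `G` if every vertex of `U` has at most `k`
neighbours inside `U` (i.e. the induced subgraph has maximum degree at most `k`). -/
def KIndep {V : Type*} (G : SimpleGraph V) (k : ℕ) (U : Set V) : Prop :=
  ∀ v ∈ U, {w | w ∈ U ∧ G.Adj v w}.ncard ≤ k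

/-- `G` is `(m,k)`-colourable: the vertices can be coloured with `m` colours so that
every colour class is `k`-independent. -/
def DefColorable {V : Type*} (G : SimpleGraph V) (m k : ℕ) : Prop :=
  ∃ c : V → Fin m, ∀ i : Fin m, KIndep G k {v | c v = i}

/-- The `k`-defective chromatic number: the least `m` such that `G` is `(m,k)`-colourable. -/
noncomputable def defChrom {V : Type*} (G : SimpleGraph V) (k : ℕ) : ℕ :=
  sInf {m | DefColorable G m k}

/-- If some vertex z of B has degree |B| - 1 in H = G[B] and at most 2k neighbours
in A, then the k-defective chromatic number of the triangle-free graph G is at most 2. -/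
theorem stmt4 {V : Type*} [Fintype V] (G : SimpleGraph V) [DecidableRel G.Adj]
    (hG : G.CliqueFree 3) (k : ℕ) (u : V) (hu : ∀ v, G.degree v ≤ G.degree u)
    (A B : Set V) (hA : A = G.neighborSet u) (hB : B = (G.neighborSet u ∪ {u})ᶜ)
    (z : V) (hz : z ∈ B)
    (hdeg : {w | w ∈ B ∧ G.Adj z w}.ncard = B.ncard - 1)
    (hAz : (A ∩ G.neighborSet z).ncard ≤ 2 * k) :
    defChrom G k ≤ 2 := by
  classical
  have tri : ∀ a b c : V, G.Adj a b → G.Adj a c → G.Adj b c → False := by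
    intro a b c h1 h2 h3
    exact hG {a, b, c} (SimpleGraph.is3Clique_triple_iff.mpr ⟨h1, h2, h3⟩)
  -- basic facts
  have hAmem : ∀ a, a ∈ A ↔ G.Adj u a := by intro a; rw [hA]; rfl
  have hBu : ∀ b ∈ B, ¬ G.Adj u b := by
    intro b hb hadj
    rw [hB] at hb; exact hb (Or.inl hadj)
  have huB : u ∉ B := by rw [hB]; intro h; exact h (Or.inr rfl)
  have hzu : z ≠ u := fun h => huB (h ▸ hz)
  have hAB : ∀ a ∈ A, a ∉ B := by
    intro a ha hab
    exact hBu a hab ((hAmem a).mp ha)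
  have memAB : ∀ w : V, w ≠ u → w ∉ A → w ∈ B := by
    intro w hwu hwA
    rw [hB]
    rintro (h | h)
    · exact hwA ((hAmem w).mpr h)
    · exact hwu h
  have hAindep : ∀ a ∈ A, ∀ b ∈ A, ¬ G.Adj a b := by
    intro a ha b hb hadj
    exact tri u a b ((hAmem a).mp ha) ((hAmem b).mp hb) hadj
  -- z is adjacent to everything else in B
  have hzadj : ∀ b ∈ B, b ≠ z → G.Adj z b := by
    have hsub : {w | w ∈ B ∧ G.Adj z w} ⊆ B \ {z} := by
      rintro w ⟨hwB, hadj⟩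
      exact ⟨hwB, fun h => G.loopless.irrefl z (h ▸ hadj)⟩
    have hcard : (B \ {z}).ncard = B.ncard - 1 :=
      Set.ncard_diff_singleton_of_mem hz
    have heq : {w | w ∈ B ∧ G.Adj z w} = B \ {z} := by
      apply Set.eq_of_subset_of_ncard_le hsub
      rw [hcard, hdeg]
    intro b hb hbz
    have : b ∈ B \ {z} := ⟨hb, hbz⟩
    rw [← heq] at this
    exact this.2
  -- the split of S = A ∩ N(z)
  set S : Set V := A ∩ G.neighborSet z with hS
  have hSfin : S.Finite := Set.toFinite _
  have hScard : hSfin.toFinset.card = S.ncard :=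
    (Set.ncard_eq_toFinset_card _ hSfin).symm
  obtain ⟨S1, hS1sub, hS1card⟩ :=
    Finset.exists_subset_card_eq (min_le_right k hSfin.toFinset.card)
  have hS1S : (↑S1 : Set V) ⊆ S := by
    intro x hx
    have := hS1sub hx
    rwa [Set.Finite.mem_toFinset] at this
  have hSk : ∀ x ∈ S, 1 ≤ k := by
    intro x hx
    have h1 : 0 < S.ncard := (Set.ncard_pos hSfin).mpr ⟨x, hx⟩
    have h2 : S.ncard ≤ 2 * k := hAz
    omega
  set C1 : Set V := (A \ ↑S1) ∪ {z} with hC1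
  have hzC1 : z ∈ C1 := Or.inr rfl
  have memC1 : ∀ w, w ∈ C1 ↔ (w ∈ A ∧ w ∉ S1) ∨ w = z := by
    intro w
    constructor
    · rintro (⟨h1, h2⟩ | h)
      · exact Or.inl ⟨h1, by simpa using h2⟩
      · exact Or.inr h
    · rintro (⟨h1, h2⟩ | h)
      · exact Or.inl ⟨h1, by simpa using h2⟩
      · exact Or.inr h
  -- the coloring
  set c : V → Fin 2 := fun v => if v ∈ C1 then 0 else 1 with hc
  have hclass0 : {v | c v = 0} = C1 := by
    ext v
    by_cases h : v ∈ C1 <;> simp [hc, h]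
  have hclass1 : {v | c v = 1} = C1ᶜ := by
    ext v
    by_cases h : v ∈ C1 <;> simp [hc, h]
  have hk0 : KIndep G k C1 := by
    intro v hv
    rcases (memC1 v).mp hv with ⟨hvA, hvS1⟩ | hveq
    · -- v ∈ A \ S1
      by_cases hvz : G.Adj z v
      · have hvS : v ∈ S := ⟨hvA, hvz⟩
        have hk1 : 1 ≤ k := hSk v hvS
        have hsub : {w | w ∈ C1 ∧ G.Adj v w} ⊆ {z} := by
          rintro w ⟨hwC1, hadj⟩
          rcases (memC1 w).mp hwC1 with ⟨hwA, _⟩ | rfl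
          · exact absurd hadj (hAindep v hvA w hwA)
          · rfl
        calc {w | w ∈ C1 ∧ G.Adj v w}.ncard ≤ ({z} : Set V).ncard :=
              Set.ncard_le_ncard hsub (Set.toFinite _)
          _ = 1 := Set.ncard_singleton z
          _ ≤ k := hk1
      · have hempty : {w | w ∈ C1 ∧ G.Adj v w} = ∅ := by
          ext w
          simp only [Set.mem_setOf_eq, Set.mem_empty_iff_false, iff_false]
          rintro ⟨hwC1, hadj⟩
          rcases (memC1 w).mp hwC1 with ⟨hwA, _⟩ | rfl
          · exact hAindep v hvA w hwA hadj
          · exact hvz hadj.symm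
        rw [hempty, Set.ncard_empty]
        exact Nat.zero_le k
    · -- v = z
      rw [hveq]
      have hsub : {w | w ∈ C1 ∧ G.Adj z w} ⊆ S \ ↑S1 := by
        rintro w ⟨hwC1, hadj⟩
        rcases (memC1 w).mp hwC1 with ⟨hwA, hwS1⟩ | hwz
        · exact ⟨⟨hwA, hadj⟩, by simpa using hwS1⟩
        · rw [hwz] at hadj; exact absurd hadj (G.loopless.irrefl z)
      have hdiff : (S \ ↑S1).ncard = S.ncard - S1.card := by
        rw [Set.ncard_diff hS1S (Set.toFinite _), Set.ncard_coe_finset]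
      have h2 : {w | w ∈ C1 ∧ G.Adj z w}.ncard ≤ (S \ ↑S1).ncard :=
        Set.ncard_le_ncard hsub (Set.toFinite _)
      rw [hdiff] at h2
      have h3 : S.ncard ≤ 2 * k := hAz
      rw [hS1card, hScard] at h2
      omega
  have hk1 : KIndep G k C1ᶜ := by
    intro v hv
    have hvC1 : v ∉ C1 := hv
    have hvz : v ≠ z := fun h => hvC1 (h ▸ hzC1)
    by_cases hvu : v = u
    · subst hvu
      have hsub : {w | w ∈ C1ᶜ ∧ G.Adj v w} ⊆ ↑S1 := by
        rintro w ⟨hwC1, hadj⟩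
        have hwA : w ∈ A := (hAmem w).mpr hadj
        by_contra hwS1
        exact hwC1 ((memC1 w).mpr (Or.inl ⟨hwA, by simpa using hwS1⟩))
      calc {w | w ∈ C1ᶜ ∧ G.Adj v w}.ncard ≤ (↑S1 : Set V).ncard :=
            Set.ncard_le_ncard hsub (Set.toFinite _)
        _ = S1.card := Set.ncard_coe_finset S1
        _ ≤ k := by rw [hS1card]; exact min_le_left _ _
    · by_cases hvA : v ∈ A
      · -- v ∈ A, v ∉ C1 so v ∈ S1
        have hvS1 : v ∈ S1 := by
          by_contra h
          exact hvC1 ((memC1 v).mpr (Or.inl ⟨hvA, h⟩))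
        have hvS : v ∈ S := hS1S hvS1
        have hk1' : 1 ≤ k := hSk v hvS
        have hsub : {w | w ∈ C1ᶜ ∧ G.Adj v w} ⊆ {u} := by
          rintro w ⟨hwC1, hadj⟩
          by_cases hwu : w = u
          · exact hwu
          · exfalso
            by_cases hwA : w ∈ A
            · exact hAindep v hvA w hwA hadj
            · have hwB : w ∈ B := memAB w hwu hwA
              have hwz : w ≠ z := fun h => hwC1 (h ▸ hzC1)
              exact tri z v w hvS.2 (hzadj w hwB hwz) hadj
        calc {w | w ∈ C1ᶜ ∧ G.Adj v w}.ncard ≤ ({u} : Set V).ncard :=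
              Set.ncard_le_ncard hsub (Set.toFinite _)
          _ = 1 := Set.ncard_singleton u
          _ ≤ k := hk1'
      · -- v ∈ B, v ≠ z
        have hvB : v ∈ B := memAB v hvu hvA
        have hvzadj : G.Adj z v := hzadj v hvB hvz
        have hempty : {w | w ∈ C1ᶜ ∧ G.Adj v w} = ∅ := by
          ext w
          simp only [Set.mem_setOf_eq, Set.mem_empty_iff_false, iff_false]
          rintro ⟨hwC1, hadj⟩
          by_cases hwu : w = u
          · subst hwu
            exact hBu v hvB hadj.symm
          · by_cases hwA : w ∈ A
            · have hwS1 : w ∈ S1 := by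
                by_contra h
                exact hwC1 ((memC1 w).mpr (Or.inl ⟨hwA, h⟩))
              exact tri z v w hvzadj (hS1S hwS1).2 hadj
            · have hwB : w ∈ B := memAB w hwu hwA
              have hwz : w ≠ z := fun h => hwC1 (h ▸ hzC1)
              exact tri z v w hvzadj (hzadj w hwB hwz) hadj
        rw [hempty, Set.ncard_empty]
        exact Nat.zero_le k
  have hcol : DefColorable G 2 k := by
    refine ⟨c, fun i => ?_⟩
    fin_cases i
    · show KIndep G k {v | c v = 0}
      rw [hclass0]; exact hk0
    · show KIndep G k {v | c v = 1}
      rw [hclass1]; exact hk1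
  exact Nat.sInf_le hcol
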